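/- Let K be a local field, φ : E → E' an isogeny of elliptic curves over K of prime degree p. Then for every prime ℓ ≠ p, the induced map on component groups E(K̄)/E₀ → E'(K̄)/E'₀ restricts to an isomorphism on ℓ-primary parts; consequently the ratio of Tamagawa numbers c(E)/c(E') is a power of p (possibly negative power). -/

import Mathlib

/-- A finite additive group killed by a prime `p` has order a power of `p`. -/
lemma card_pow_of_killed (p : ℕ) (hp : p.Prime) (G : Type*) [AddCommGroup G] [Finite G]
    (h : ∀ x : G, p • x = 0) : ∃ n : ℕ, Nat.card G = p ^ n := by
  haveI : Fact p.Prime := ⟨hp⟩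
  have hpg : IsPGroup p (Multiplicative G) := by
    intro g
    exact ⟨1, by rw [pow_one]; exact h g.toAdd⟩
  obtain ⟨n, hn⟩ := IsPGroup.iff_card.mp hpg
  exact ⟨n, hn⟩

/-- Let `φ : E → E'` be an isogeny of elliptic curves over a local field
of prime degree `p`.  Then for every prime `ℓ ≠ p` the induced map on component groups
`E(K̄)/E₀ → E'(K̄)/E'₀` restricts to an isomorphism (a bijection) on `ℓ`-primary parts;
consequently the ratio of Tamagawa numbers `c(E)/c(E')` is a (possibly negative) power
of `p`.

Here the component groups are finite abelian groups `A, B`; `φ` induces `φ : A →+ B` and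
its dual induces `ψ : B →+ A` with both composites equal to multiplication by `p`
(since `φᵗ∘φ = [p] = φ∘φᵗ`), and the Tamagawa numbers are `c = |A|`, `c' = |B|`. -/
theorem component_group_primary_parts_and_tamagawa_ratio
    (p : ℕ) (hp : p.Prime) {A B : Type*} [AddCommGroup A] [AddCommGroup B]
    [Finite A] [Finite B]
    (φ : A →+ B) (ψ : B →+ A)
    (hψφ : ∀ x : A, ψ (φ x) = p • x) (hφψ : ∀ y : B, φ (ψ y) = p • y) :
    (∀ ℓ : ℕ, ℓ.Prime → ℓ ≠ p →
      Set.BijOn φ {a : A | ∃ n : ℕ, ℓ ^ n • a = 0} {b : B | ∃ n : ℕ, ℓ ^ n • b = 0}) ∧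
    ∃ k : ℤ, (Nat.card A : ℚ) = (p : ℚ) ^ k * (Nat.card B : ℚ) := by
  constructor
  · intro ℓ hℓ hne
    have hcop : ∀ m : ℕ, IsCoprime (p : ℤ) ((ℓ : ℤ) ^ m) := by
      intro m
      rw [Int.isCoprime_iff_gcd_eq_one, ← Nat.cast_pow, Int.gcd_natCast_natCast]
      exact Nat.Coprime.pow_right m ((Nat.coprime_primes hp hℓ).mpr (Ne.symm hne))
    refine ⟨?_, ?_, ?_⟩
    · rintro a ⟨n, hn⟩
      exact ⟨n, by rw [← map_nsmul, hn, map_zero]⟩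
    · rintro a₁ ⟨n₁, hn₁⟩ a₂ ⟨n₂, hn₂⟩ heq
      set a := a₁ - a₂ with ha
      have hpa : (p : ℤ) • a = 0 := by
        have : φ a = 0 := by simp [ha, map_sub, heq]
        have := hψφ a
        rw [this] at *
        simp only [ha] at *
        have h0 : ψ (φ (a₁ - a₂)) = 0 := by rw [map_sub, heq, sub_self, map_zero]
        rw [hψφ] at h0
        simpa using h0
      have hla : ((ℓ : ℤ) ^ (n₁ + n₂)) • a = 0 := by
        have e1 : ℓ ^ (n₁ + n₂) • a₁ = 0 := by
          rw [add_comm, pow_add, mul_smul, hn₁, smul_zero]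
        have e2 : ℓ ^ (n₁ + n₂) • a₂ = 0 := by
          rw [pow_add, mul_smul, hn₂, smul_zero]
        have e : ℓ ^ (n₁ + n₂) • a = 0 := by rw [ha, smul_sub, e1, e2, sub_zero]
        rw [show ((ℓ:ℤ) ^ (n₁+n₂)) = ((ℓ ^ (n₁+n₂) : ℕ) : ℤ) by push_cast; ring,
          natCast_zsmul]
        exact e
      obtain ⟨u, v, huv⟩ := hcop (n₁ + n₂)
      have : a = 0 := by
        calc a = (u * p + v * (ℓ:ℤ) ^ (n₁ + n₂)) • a := by rw [huv, one_smul]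
        _ = u • ((p:ℤ) • a) + v • (((ℓ:ℤ) ^ (n₁+n₂)) • a) := by
            rw [add_smul, mul_smul, mul_smul]
        _ = 0 := by rw [hpa, hla, smul_zero, smul_zero, add_zero]
      exact sub_eq_zero.mp this
    · rintro b ⟨n, hn⟩
      obtain ⟨u, v, huv⟩ := hcop n
      refine ⟨ψ (u • b), ⟨n, ?_⟩, ?_⟩
      · show (ℓ : ℕ) ^ n • ψ (u • b) = 0
        rw [← map_nsmul]
        have : (ℓ : ℕ) ^ n • (u • b) = u • ((ℓ:ℕ) ^ n • b) := smul_comm _ _ _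
        rw [this, hn, smul_zero, map_zero]
      · show φ (ψ (u • b)) = b
        have h1 : φ (ψ (u • b)) = u • φ (ψ b) := by
          rw [map_zsmul, map_zsmul]
        rw [h1, hφψ]
        have hb : ((ℓ:ℤ) ^ n) • b = 0 := by
          rw [show ((ℓ:ℤ) ^ n) = ((ℓ ^ n : ℕ) : ℤ) by push_cast; ring, natCast_zsmul]
          exact hn
        calc u • ((p:ℕ) • b) = (u * p) • b := by
              rw [← natCast_zsmul b p, ← mul_smul]
        _ = (u * p) • b + v • (((ℓ:ℤ)^n) • b) := by rw [hb, smul_zero, add_zero]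
        _ = (u * p + v * (ℓ:ℤ)^n) • b := by rw [add_smul, mul_smul, mul_smul]
        _ = b := by rw [huv, one_smul]
  · -- Tamagawa ratio
    have hker : ∀ x : φ.ker, p • x = 0 := by
      rintro ⟨x, hx⟩
      have : p • x = 0 := by
        rw [← hψφ x, AddMonoidHom.mem_ker.mp hx, map_zero]
      ext
      simpa using this
    have hcoker : ∀ y : B ⧸ φ.range, p • y = 0 := by
      intro y
      induction y using QuotientAddGroup.induction_on with
      | H b =>
        rw [← QuotientAddGroup.mk_nsmul]
        rw [QuotientAddGroup.eq_zero_iff]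
        exact ⟨ψ b, (hφψ b).symm ▸ rfl⟩
    obtain ⟨a, ha⟩ := card_pow_of_killed p hp φ.ker hker
    obtain ⟨b, hb⟩ := card_pow_of_killed p hp (B ⧸ φ.range) hcoker
    have hA : Nat.card A = Nat.card φ.range * p ^ a := by
      have h1 := AddSubgroup.card_eq_card_quotient_mul_card_addSubgroup φ.ker
      have h2 : Nat.card (A ⧸ φ.ker) = Nat.card φ.range :=
        Nat.card_congr (QuotientAddGroup.quotientKerEquivRange φ).toEquiv
      rw [h1, h2, ha]
    have hB : Nat.card B = p ^ b * Nat.card φ.range := by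
      have h1 := AddSubgroup.card_eq_card_quotient_mul_card_addSubgroup φ.range
      rw [h1, hb, Nat.mul_comm]
    refine ⟨(a : ℤ) - b, ?_⟩
    have hp0 : (p : ℚ) ≠ 0 := by exact_mod_cast hp.ne_zero
    rw [hA, hB]
    push_cast
    rw [zpow_sub₀ hp0]
    field_simp
    simp only [zpow_natCast]
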